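/- arXiv:1903.01165 — 2 statements merged into one kernel-verified Lean document; each statement's English description precedes it below -/
import Mathlib

section
/- In a credit-attribution setting with reliabilities p : N → [0,1], for every author x the Shapley value of x in the reliability extension of the full credit game satisfies Sh[v̄_{FC}](x) = p_x · Σ_{k ∈ Pap_x} w_k · Σ_{S ⊆ Auth_k∖{x}} ( ∏_{i∈S}(1−p_i) ) / ( (n_k − |S|) · binom(n_k, |S|) ). -/
open Finset

attribute [local instance] Classical.propDecidable

noncomputable section

/-- `Π_{T,S}(p) = (∏_{i∈T} p i) * (∏_{i∈S\T} (1 - p i))`. -/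
def prodPi {α : Type*} (p : α → ℝ) (T S : Finset α) : ℝ :=
  (∏ i ∈ T, p i) * (∏ i ∈ S \ T, (1 - p i))

/-- Reliability extension of a TU-game. -/
def relExt {α : Type*} (p : α → ℝ) (v : Finset α → ℝ) (S : Finset α) : ℝ :=
  ∑ T ∈ S.powerset, v T * prodPi p T S

/-- The set of players preceding `x` in the ordering `σ`. -/
def precedingSet {α : Type*} [Fintype α] (σ : Fin (Fintype.card α) ≃ α) (x : α) : Finset α :=
  Finset.univ.filter fun y => σ.symm y < σ.symm x

/-- The Shapley value of player `x` in the TU-game `v`. -/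
def shapley {α : Type*} [Fintype α] (v : Finset α → ℝ) (x : α) : ℝ :=
  (1 / ((Fintype.card α).factorial : ℝ)) *
    ∑ σ : Fin (Fintype.card α) ≃ α,
      (v (insert x (precedingSet σ x)) - v (precedingSet σ x))

/-- `Pap x`: the papers having `x` among their authors. -/
def Pap {α β : Type*} [Fintype β] (Auth : β → Finset α) (x : α) : Finset β :=
  Finset.univ.filter fun k => x ∈ Auth k

/-- The full credit game. -/
def vFC {α β : Type*} [Fintype β] (Auth : β → Finset α) (w : β → ℝ) (S : Finset α) : ℝ :=
  ∑ k ∈ Finset.univ.filter (fun k => (Auth k ∩ S).Nonempty), w k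

/-- The full obligation game. -/
def vFO {α β : Type*} [Fintype β] (Auth : β → Finset α) (w : β → ℝ) (S : Finset α) : ℝ :=
  ∑ k ∈ Finset.univ.filter (fun k => Auth k ⊆ S), w k

/-! ### Auxiliary counting lemmas -/

section Count
variable {α : Type*} [Fintype α]

def maxFiber (B : Finset α) (z : α) : Finset (Fin (Fintype.card α) ≃ α) :=
  Finset.univ.filter fun σ => ∀ y ∈ B, σ.symm y ≤ σ.symm z

lemma card_maxFiber_eq {B : Finset α} {z x : α} (hz : z ∈ B) (hx : x ∈ B) :
    (maxFiber B z).card = (maxFiber B x).card := by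
  have key : ∀ u v : α, u ∈ B → v ∈ B → ∀ σ, σ ∈ maxFiber B u →
      σ.trans (Equiv.swap u v) ∈ maxFiber B v := by
    intro u v hu hv σ hσ
    simp only [maxFiber, mem_filter, mem_univ, true_and] at hσ ⊢
    intro y hy
    have h1 : (σ.trans (Equiv.swap u v)).symm y = σ.symm (Equiv.swap u v y) := by
      simp [Equiv.symm_trans_apply, Equiv.symm_swap]
    have h2 : (σ.trans (Equiv.swap u v)).symm v = σ.symm u := by
      simp [Equiv.symm_trans_apply, Equiv.symm_swap]
    rw [h1, h2]
    have : Equiv.swap u v y ∈ B := by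
      rcases eq_or_ne y u with rfl | hyu
      · simpa [Equiv.swap_apply_left] using hv
      rcases eq_or_ne y v with rfl | hyv
      · simpa [Equiv.swap_apply_right] using hu
      · rwa [Equiv.swap_apply_of_ne_of_ne hyu hyv]
    exact hσ _ this
  refine Finset.card_bij' (fun σ _ => σ.trans (Equiv.swap z x))
    (fun σ _ => σ.trans (Equiv.swap z x)) ?_ ?_ ?_ ?_
  · intro σ hσ; exact key z x hz hx σ hσ
  · intro σ hσ
    have := key x z hx hz σ hσ
    rwa [Equiv.swap_comm] at this
  · intro σ _
    ext i
    simp [Equiv.swap_apply_self]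
  · intro σ _
    ext i
    simp [Equiv.swap_apply_self]

lemma sum_card_maxFiber {B : Finset α} (hB : B.Nonempty) :
    ∑ z ∈ B, (maxFiber B z).card = (Fintype.card α).factorial := by
  have hcover : (Finset.univ : Finset (Fin (Fintype.card α) ≃ α)) = B.biUnion (maxFiber B) := by
    ext σ
    simp only [mem_univ, true_iff, mem_biUnion]
    obtain ⟨b, hb, hmax⟩ := Finset.exists_max_image B (fun y => σ.symm y) hB
    exact ⟨b, hb, by simpa [maxFiber] using hmax⟩
  have hdisj : ∀ z ∈ B, ∀ z' ∈ B, z ≠ z' → Disjoint (maxFiber B z) (maxFiber B z') := by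
    intro z hz z' hz' hne
    rw [Finset.disjoint_left]
    intro σ h1 h2
    simp only [maxFiber, mem_filter, mem_univ, true_and] at h1 h2
    exact hne (σ.symm.injective (le_antisymm (h2 z hz) (h1 z' hz')))
  have h1 : (Finset.univ : Finset (Fin (Fintype.card α) ≃ α)).card
      = (Fintype.card α).factorial := by
    rw [Finset.card_univ, Fintype.card_equiv ((Fintype.equivFin α).symm)]
    simp
  rw [← h1, hcover, Finset.card_biUnion hdisj]

lemma key_count {T : Finset α} {x : α} (hx : x ∉ T) :
    ((Finset.univ.filter fun σ : Fin (Fintype.card α) ≃ α =>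
        ∀ y ∈ T, σ.symm y < σ.symm x).card) * (T.card + 1) = (Fintype.card α).factorial := by
  set B := insert x T with hB
  have hxB : x ∈ B := mem_insert_self x T
  have hfe : (Finset.univ.filter fun σ : Fin (Fintype.card α) ≃ α =>
      ∀ y ∈ T, σ.symm y < σ.symm x) = maxFiber B x := by
    ext σ
    simp only [maxFiber, mem_filter, mem_univ, true_and, hB, mem_insert]
    constructor
    · rintro h y (rfl | hy)
      · exact le_rfl
      · exact (h y hy).le
    · intro h y hy
      refine lt_of_le_of_ne (h y (Or.inr hy)) fun he => ?_
      exact hx (σ.symm.injective he ▸ hy)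
  rw [hfe]
  have := sum_card_maxFiber (B := B) ⟨x, hxB⟩
  rw [Finset.sum_congr rfl (fun z hz => card_maxFiber_eq hz hxB), Finset.sum_const,
    smul_eq_mul] at this
  rw [← this, hB, card_insert_of_notMem hx, mul_comm]

lemma sum_perm_prod (A' : Finset α) (x : α) (hx : x ∉ A') (q : α → ℝ) :
    ∑ σ : Fin (Fintype.card α) ≃ α, ∏ i ∈ A'.filter (fun i => σ.symm i < σ.symm x), q i
    = ∑ T ∈ A'.powerset, (∏ i ∈ T, (q i - 1)) *
        (((Fintype.card α).factorial : ℝ) / (T.card + 1)) := by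
  have step1 : ∀ σ : Fin (Fintype.card α) ≃ α,
      ∏ i ∈ A'.filter (fun i => σ.symm i < σ.symm x), q i
      = ∑ T ∈ A'.powerset, ∏ i ∈ T, (if σ.symm i < σ.symm x then q i - 1 else 0) := by
    intro σ
    rw [Finset.prod_filter]
    have : ∀ i, (if σ.symm i < σ.symm x then q i else 1)
        = (if σ.symm i < σ.symm x then q i - 1 else 0) + 1 := by
      intro i; split_ifs <;> ring
    rw [Finset.prod_congr rfl (fun i _ => this i), Finset.prod_add]
    simp
  simp_rw [step1]
  rw [Finset.sum_comm]
  refine Finset.sum_congr rfl fun T hT => ?_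
  rw [mem_powerset] at hT
  have hxt : x ∉ T := fun h => hx (hT h)
  have step2 : ∀ σ : Fin (Fintype.card α) ≃ α,
      ∏ i ∈ T, (if σ.symm i < σ.symm x then q i - 1 else 0)
      = if (∀ y ∈ T, σ.symm y < σ.symm x) then ∏ i ∈ T, (q i - 1) else 0 := by
    intro σ
    split_ifs with h
    · exact Finset.prod_congr rfl fun i hi => if_pos (h i hi)
    · push_neg at h
      obtain ⟨i, hi, hni⟩ := h
      exact Finset.prod_eq_zero hi (if_neg (not_lt.mpr hni))
  simp_rw [step2]
  rw [Finset.sum_ite, Finset.sum_const_zero, add_zero, Finset.sum_const, nsmul_eq_mul]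
  have hc := key_count (T := T) (x := x) hxt
  have hTc : ((T.card : ℝ) + 1) ≠ 0 := by positivity
  have : (((Finset.univ.filter fun σ : Fin (Fintype.card α) ≃ α =>
      ∀ y ∈ T, σ.symm y < σ.symm x).card : ℕ) : ℝ) =
      ((Fintype.card α).factorial : ℝ) / (T.card + 1) := by
    rw [eq_div_iff hTc]
    exact_mod_cast congrArg (Nat.cast : ℕ → ℝ) hc
  rw [this, mul_comm]

end Count

/-! ### Binomial identities -/

lemma nat_term (t m j : ℕ) (hj : j ≤ m) :
    m.choose j * (t + j).factorial * (m - j).factorial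
      = m.factorial * t.factorial * (t + j).choose j := by
  have h1 : m.choose j * j.factorial * (m - j).factorial = m.factorial :=
    Nat.choose_mul_factorial_mul_factorial hj
  have h2 : (t + j).choose j * j.factorial * t.factorial = (t + j).factorial := by
    have := Nat.choose_mul_factorial_mul_factorial (Nat.le_add_left j t)
    simpa [Nat.add_sub_cancel] using this
  have := Nat.factorial_pos j
  apply Nat.eq_of_mul_eq_mul_right this
  calc m.choose j * (t + j).factorial * (m - j).factorial * j.factorial
      = (m.choose j * j.factorial * (m - j).factorial) * (t + j).factorial := by ring
    _ = m.factorial * (t + j).factorial := by rw [h1]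
    _ = m.factorial * t.factorial * ((t + j).choose j * j.factorial) := by
        conv_lhs => rw [← h2]
        ring
    _ = m.factorial * t.factorial * (t + j).choose j * j.factorial := by ring

lemma nat_sum (t m : ℕ) :
    ∑ j ∈ range (m + 1), m.choose j * (t + j).factorial * (m - j).factorial
      = m.factorial * t.factorial * (t + m + 1).choose (t + 1) := by
  rw [Finset.sum_congr rfl fun j hj => nat_term t m j (Nat.lt_succ_iff.mp (mem_range.mp hj))]
  rw [← Finset.mul_sum]
  congr 1
  have hsymm : ∀ j, (t + j).choose j = (t + j).choose t := by
    intro j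
    have := Nat.choose_symm (Nat.le_add_right t j)
    simpa [Nat.add_sub_cancel_left] using this
  simp_rw [hsymm]
  have := Nat.sum_Icc_choose (t + m) t
  rw [← this]
  refine Finset.sum_nbij' (fun j => t + j) (fun i => i - t) ?_ ?_ ?_ ?_ ?_
  · intro j hj; simp only [mem_range] at hj; simp only [mem_Icc]; omega
  · intro i hi; simp only [mem_Icc] at hi; simp only [mem_range]; omega
  · intro j hj; simp
  · intro i hi; simp only [mem_Icc] at hi; omega
  · intro j hj; rfl

lemma real_inner (t m a : ℕ) (ha : a = t + m + 1) :
    ∑ j ∈ range (m + 1), (m.choose j : ℝ) *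
      (1 / (((a - (t + j) : ℕ) : ℝ) * ((a.choose (t + j) : ℕ) : ℝ)))
    = 1 / ((t : ℝ) + 1) := by
  have hfa : ((a.factorial : ℕ) : ℝ) ≠ 0 := by positivity
  have hterm : ∀ j ∈ range (m + 1), (m.choose j : ℝ) *
      (1 / (((a - (t + j) : ℕ) : ℝ) * ((a.choose (t + j) : ℕ) : ℝ)))
      = ((m.choose j * (t + j).factorial * (m - j).factorial : ℕ) : ℝ) / (a.factorial : ℝ) := by
    intro j hj
    rw [mem_range, Nat.lt_succ_iff] at hj
    have hs : t + j < a := by omega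
    have h1 : (a - (t + j)) * a.choose (t + j) *
        ((t + j).factorial * (a - (t + j) - 1).factorial) = a.factorial := by
      have h2 : a.choose (t + j) * (t + j).factorial * (a - (t + j)).factorial = a.factorial :=
        Nat.choose_mul_factorial_mul_factorial hs.le
      have h3 : (a - (t + j)).factorial = (a - (t + j)) * (a - (t + j) - 1).factorial := by
        have : a - (t + j) = (a - (t + j) - 1) + 1 := by omega
        rw [this, Nat.factorial_succ]
        congr 1 <;> omega
      rw [← h2, h3]; ring
    have h4 : a - (t + j) - 1 = m - j := by omega
    rw [h4] at h1
    have hd1 : ((a - (t + j) : ℕ) : ℝ) ≠ 0 := by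
      have : 0 < a - (t + j) := by omega
      positivity
    have hd2 : ((a.choose (t + j) : ℕ) : ℝ) ≠ 0 := by
      have := Nat.choose_pos hs.le
      positivity
    have h1' : (((a - (t + j)) : ℕ) : ℝ) * (a.choose (t + j) : ℝ) *
        (((t + j).factorial : ℝ) * ((m - j).factorial : ℝ)) = (a.factorial : ℝ) := by
      exact_mod_cast congrArg (Nat.cast (R := ℝ)) h1
    rw [mul_one_div, div_eq_div_iff (mul_ne_zero hd1 hd2) hfa]
    push_cast
    linear_combination (-(m.choose j : ℝ)) * h1'
  rw [Finset.sum_congr rfl hterm, ← Finset.sum_div]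
  rw [← Nat.cast_sum, nat_sum t m, ← ha]
  have h5 : m.factorial * t.factorial * a.choose (t + 1) * (t + 1) = a.factorial := by
    have h6 : a.choose (t + 1) * (t + 1).factorial * (a - (t + 1)).factorial = a.factorial :=
      Nat.choose_mul_factorial_mul_factorial (by omega)
    have h7 : a - (t + 1) = m := by omega
    rw [h7, Nat.factorial_succ] at h6
    rw [← h6]; ring
  have h5' : (m.factorial : ℝ) * t.factorial * a.choose (t + 1) * (t + 1) = a.factorial := by
    exact_mod_cast congrArg (Nat.cast (R := ℝ)) h5
  rw [div_eq_div_iff hfa (by positivity)]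
  push_cast
  linear_combination h5'

lemma binom_sum {α : Type*} (A' : Finset α) (q : α → ℝ) (a : ℕ)
    (ha : a = A'.card + 1) :
    ∑ T ∈ A'.powerset, (∏ i ∈ T, (q i - 1)) * (1 / ((T.card : ℝ) + 1))
    = ∑ S ∈ A'.powerset, (∏ i ∈ S, q i) /
        (((a - S.card : ℕ) : ℝ) * ((a.choose S.card : ℕ) : ℝ)) := by
  have expand : ∀ S : Finset α, ∏ i ∈ S, q i = ∑ T ∈ S.powerset, ∏ i ∈ T, (q i - 1) := by
    intro S
    have h := Finset.prod_add (fun i => q i - 1) (fun _ => (1 : ℝ)) S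
    simp only [prod_const_one, mul_one, sub_add_cancel] at h
    exact h
  have rhs1 : ∑ S ∈ A'.powerset, (∏ i ∈ S, q i) /
        (((a - S.card : ℕ) : ℝ) * ((a.choose S.card : ℕ) : ℝ))
      = ∑ S ∈ A'.powerset, ∑ T ∈ S.powerset, (∏ i ∈ T, (q i - 1)) *
        (1 / (((a - S.card : ℕ) : ℝ) * ((a.choose S.card : ℕ) : ℝ))) := by
    refine Finset.sum_congr rfl fun S hS => ?_
    rw [expand S, Finset.sum_div]
    exact Finset.sum_congr rfl fun T _ => by rw [div_eq_mul_one_div]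
  rw [rhs1]
  have hpow : ∀ S ∈ A'.powerset, (S.powerset : Finset (Finset α))
      = A'.powerset.filter (fun T => T ⊆ S) := by
    intro S hS
    rw [mem_powerset] at hS
    ext T
    simp only [mem_powerset, mem_filter]
    exact ⟨fun h => ⟨h.trans hS, h⟩, fun h => h.2⟩
  have rhs2 : ∑ S ∈ A'.powerset, ∑ T ∈ S.powerset, (∏ i ∈ T, (q i - 1)) *
        (1 / (((a - S.card : ℕ) : ℝ) * ((a.choose S.card : ℕ) : ℝ)))
      = ∑ T ∈ A'.powerset, ∑ S ∈ A'.powerset.filter (fun S => T ⊆ S),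
        (∏ i ∈ T, (q i - 1)) *
        (1 / (((a - S.card : ℕ) : ℝ) * ((a.choose S.card : ℕ) : ℝ))) := by
    rw [Finset.sum_congr rfl fun S hS => by
      rw [hpow S hS, Finset.sum_filter]]
    rw [Finset.sum_comm]
    refine Finset.sum_congr rfl fun T hT => ?_
    rw [Finset.sum_filter]
  rw [rhs2]
  refine Finset.sum_congr rfl fun T hT => ?_
  rw [mem_powerset] at hT
  rw [← Finset.mul_sum]
  congr 1
  have step : ∑ S ∈ A'.powerset.filter (fun S => T ⊆ S),
      (1 / (((a - S.card : ℕ) : ℝ) * ((a.choose S.card : ℕ) : ℝ)))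
      = ∑ U ∈ (A' \ T).powerset,
      (1 / (((a - (T.card + U.card) : ℕ) : ℝ) * ((a.choose (T.card + U.card) : ℕ) : ℝ))) := by
    refine Finset.sum_nbij' (fun S => S \ T) (fun U => U ∪ T) ?_ ?_ ?_ ?_ ?_
    · intro S hS
      simp only [mem_filter, mem_powerset] at hS
      simp only [mem_powerset]
      exact sdiff_subset_sdiff hS.1 le_rfl
    · intro U hU
      simp only [mem_powerset] at hU
      simp only [mem_filter, mem_powerset]
      constructor
      · exact union_subset (hU.trans sdiff_subset) hT
      · exact subset_union_right
    · intro S hS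
      simp only [mem_filter, mem_powerset] at hS
      exact sdiff_union_of_subset hS.2
    · intro U hU
      simp only [mem_powerset] at hU
      have hd : Disjoint U T := Finset.disjoint_left.mpr fun x hx hxT =>
        (Finset.mem_sdiff.mp (hU hx)).2 hxT
      exact union_sdiff_cancel_right hd
    · intro S hS
      simp only [mem_filter, mem_powerset] at hS
      have : T.card + (S \ T).card = S.card := by
        rw [card_sdiff_of_subset hS.2]
        have := card_le_card hS.2
        omega
      rw [this]
  rw [step]
  have grouped : ∑ U ∈ (A' \ T).powerset,
      (1 / (((a - (T.card + U.card) : ℕ) : ℝ) * ((a.choose (T.card + U.card) : ℕ) : ℝ)))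
      = ∑ j ∈ range ((A' \ T).card + 1), ((A' \ T).card.choose j : ℝ) *
        (1 / (((a - (T.card + j) : ℕ) : ℝ) * ((a.choose (T.card + j) : ℕ) : ℝ))) := by
    rw [Finset.sum_powerset_apply_card
      (f := fun c => (1 / (((a - (T.card + c) : ℕ) : ℝ) * ((a.choose (T.card + c) : ℕ) : ℝ))))]
    refine Finset.sum_congr rfl fun j _ => ?_
    rw [nsmul_eq_mul]
  rw [grouped, real_inner T.card (A' \ T).card a ?hma]
  case hma =>
    rw [card_sdiff_of_subset hT, ha]
    have := card_le_card hT
    omega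

/-! ### The reliability extension of the full credit game -/

section RelExt
variable {α β : Type*} [Fintype β]

lemma sum_prodPi (p : α → ℝ) (S : Finset α) :
    ∑ T ∈ S.powerset, prodPi p T S = 1 := by
  have h := Finset.prod_add (fun i => p i) (fun i => 1 - p i) S
  simp only [add_sub_cancel] at h
  rw [Finset.prod_const_one] at h
  simpa [prodPi] using h.symm

lemma sum_prodPi_empty_inter (p : α → ℝ) (S A : Finset α) :
    ∑ T ∈ (S \ A).powerset, prodPi p T S = ∏ i ∈ A ∩ S, (1 - p i) := by
  have key : ∀ T ∈ (S \ A).powerset, prodPi p T S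
      = (∏ i ∈ A ∩ S, (1 - p i)) * ((∏ i ∈ T, p i) * ∏ i ∈ (S \ A) \ T, (1 - p i)) := by
    intro T hT
    rw [mem_powerset] at hT
    have hsplit : S \ T = (A ∩ S) ∪ ((S \ A) \ T) := by
      ext y
      simp only [mem_sdiff, mem_union, mem_inter]
      constructor
      · rintro ⟨hyS, hyT⟩
        by_cases hyA : y ∈ A
        · exact Or.inl ⟨hyA, hyS⟩
        · exact Or.inr ⟨⟨hyS, hyA⟩, hyT⟩
      · rintro (⟨hyA, hyS⟩ | ⟨⟨hyS, hyA⟩, hyT⟩)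
        · exact ⟨hyS, fun hyT => (mem_sdiff.mp (hT hyT)).2 hyA⟩
        · exact ⟨hyS, hyT⟩
    have hdisj : Disjoint (A ∩ S) ((S \ A) \ T) := by
      rw [Finset.disjoint_left]
      intro y hy1 hy2
      exact (mem_sdiff.mp (mem_sdiff.mp hy2).1).2 (mem_inter.mp hy1).1
    rw [prodPi, hsplit, Finset.prod_union hdisj]
    ring
  rw [Finset.sum_congr rfl key, ← Finset.mul_sum]
  have h2 : ∑ T ∈ (S \ A).powerset, (∏ i ∈ T, p i) * ∏ i ∈ (S \ A) \ T, (1 - p i) = 1 := by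
    have h := Finset.prod_add (fun i => p i) (fun i => 1 - p i) (S \ A)
    simp only [add_sub_cancel] at h
    simpa using h.symm
  rw [h2, mul_one]

lemma relExt_vFC (Auth : β → Finset α) (w : β → ℝ) (p : α → ℝ) (S : Finset α) :
    relExt p (vFC Auth w) S = ∑ k : β, w k * (1 - ∏ i ∈ Auth k ∩ S, (1 - p i)) := by
  unfold relExt vFC
  have step1 : ∀ T ∈ S.powerset,
      (∑ k ∈ Finset.univ.filter (fun k => (Auth k ∩ T).Nonempty), w k) * prodPi p T S
      = ∑ k : β, (if (Auth k ∩ T).Nonempty then w k * prodPi p T S else 0) := by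
    intro T _
    rw [Finset.sum_mul, Finset.sum_filter]
  rw [Finset.sum_congr rfl step1, Finset.sum_comm]
  refine Finset.sum_congr rfl fun k _ => ?_
  have split : ∑ T ∈ S.powerset, (if (Auth k ∩ T).Nonempty then w k * prodPi p T S else 0)
      = w k * ∑ T ∈ S.powerset.filter (fun T => (Auth k ∩ T).Nonempty), prodPi p T S := by
    rw [← Finset.sum_filter, ← Finset.mul_sum]
  rw [split]
  congr 1
  have hcompl : S.powerset.filter (fun T => ¬ (Auth k ∩ T).Nonempty)
      = (S \ Auth k).powerset := by
    ext T
    simp only [mem_filter, mem_powerset, not_nonempty_iff_eq_empty,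
      ← Finset.disjoint_iff_inter_eq_empty, Finset.subset_sdiff]
    tauto
  have htotal := sum_prodPi p S
  rw [← Finset.sum_filter_add_sum_filter_not S.powerset (fun T => (Auth k ∩ T).Nonempty)
    (fun T => prodPi p T S)] at htotal
  rw [hcompl, sum_prodPi_empty_inter p S (Auth k)] at htotal
  linarith

lemma marginal_vFC (Auth : β → Finset α) (w : β → ℝ) (p : α → ℝ) (S : Finset α)
    (x : α) (hx : x ∉ S) :
    relExt p (vFC Auth w) (insert x S) - relExt p (vFC Auth w) S
    = ∑ k ∈ Pap Auth x, w k * (p x * ∏ i ∈ Auth k ∩ S, (1 - p i)) := by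
  rw [relExt_vFC, relExt_vFC, ← Finset.sum_sub_distrib, Pap, Finset.sum_filter]
  refine Finset.sum_congr rfl fun k _ => ?_
  split_ifs with hk
  · have hins : Auth k ∩ insert x S = insert x (Auth k ∩ S) := by
      ext i
      simp only [mem_inter, mem_insert]
      constructor
      · rintro ⟨hiA, rfl | hiS⟩
        · exact Or.inl rfl
        · exact Or.inr ⟨hiA, hiS⟩
      · rintro (rfl | ⟨hiA, hiS⟩)
        · exact ⟨hk, Or.inl rfl⟩
        · exact ⟨hiA, Or.inr hiS⟩
    have hxni : x ∉ Auth k ∩ S := fun h => hx (mem_inter.mp h).2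
    rw [hins, Finset.prod_insert hxni]
    ring
  · have hins : Auth k ∩ insert x S = Auth k ∩ S := by
      ext i
      simp only [mem_inter, mem_insert]
      constructor
      · rintro ⟨hiA, rfl | hiS⟩
        · exact absurd hiA hk
        · exact ⟨hiA, hiS⟩
      · rintro ⟨hiA, hiS⟩
        exact ⟨hiA, Or.inr hiS⟩
    rw [hins]
    ring

end RelExt

theorem stmt_5 {α β : Type*} [Fintype α] [Fintype β] [DecidableEq α]
    (Auth : β → Finset α) (hAuth : ∀ k, (Auth k).Nonempty)
    (w : β → ℝ) (hw : ∀ k, 0 ≤ w k)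
    (p : α → ℝ) (hp : ∀ i, p i ∈ Set.Icc (0 : ℝ) 1) (x : α) :
    shapley (relExt p (vFC Auth w)) x =
      p x * ∑ k ∈ Pap Auth x,
        w k * ∑ S ∈ ((Auth k).erase x).powerset,
          (∏ i ∈ S, (1 - p i)) /
            ((((Auth k).card - S.card : ℕ) : ℝ) * (((Auth k).card.choose S.card : ℕ) : ℝ)) := by
  rename_i instFa instFb instDE
  have hE : instDE = (fun a b => Classical.propDecidable (a = b)) := Subsingleton.elim _ _
  subst hE
  have hn : ((Fintype.card α).factorial : ℝ) ≠ 0 := by positivity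
  have hmarg : ∀ σ : Fin (Fintype.card α) ≃ α,
      relExt p (vFC Auth w) (insert x (precedingSet σ x))
        - relExt p (vFC Auth w) (precedingSet σ x)
      = ∑ k ∈ Pap Auth x, w k * (p x * ∏ i ∈ Auth k ∩ precedingSet σ x, (1 - p i)) := by
    intro σ
    refine marginal_vFC Auth w p _ x ?_
    simp [precedingSet]
  have hkey : ∀ k ∈ Pap Auth x,
      ∑ σ : Fin (Fintype.card α) ≃ α, ∏ i ∈ Auth k ∩ precedingSet σ x, (1 - p i)
      = ((Fintype.card α).factorial : ℝ) *
        ∑ S ∈ ((Auth k).erase x).powerset, (∏ i ∈ S, (1 - p i)) /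
          ((((Auth k).card - S.card : ℕ) : ℝ) *
            (((Auth k).card.choose S.card : ℕ) : ℝ)) := by
    intro k hk
    have hxk : x ∈ Auth k := by simpa [Pap] using hk
    have hinter : ∀ σ : Fin (Fintype.card α) ≃ α,
        Auth k ∩ precedingSet σ x
        = ((Auth k).erase x).filter (fun i => σ.symm i < σ.symm x) := by
      intro σ
      ext i
      simp only [mem_inter, precedingSet, mem_filter, mem_univ, true_and, mem_erase]
      constructor
      · rintro ⟨hiA, hlt⟩
        exact ⟨⟨fun he => absurd hlt (by rw [he]; exact lt_irrefl _), hiA⟩, hlt⟩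
      · rintro ⟨⟨_, hiA⟩, hlt⟩
        exact ⟨hiA, hlt⟩
    simp_rw [hinter]
    rw [sum_perm_prod ((Auth k).erase x) x (notMem_erase x _) (fun i => 1 - p i)]
    have hstep : ∀ T ∈ ((Auth k).erase x).powerset,
        (∏ i ∈ T, ((1 - p i) - 1)) * (((Fintype.card α).factorial : ℝ) / (T.card + 1))
        = ((Fintype.card α).factorial : ℝ) *
          ((∏ i ∈ T, ((1 - p i) - 1)) * (1 / ((T.card : ℝ) + 1))) := by
      intro T _; ring
    rw [Finset.sum_congr rfl hstep, ← Finset.mul_sum]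
    congr 1
    exact binom_sum ((Auth k).erase x) (fun i => 1 - p i) ((Auth k).card)
      (Finset.card_erase_add_one hxk).symm
  unfold shapley
  rw [Finset.sum_congr rfl fun σ _ => hmarg σ, Finset.sum_comm]
  have hfinal : ∀ k ∈ Pap Auth x,
      ∑ σ : Fin (Fintype.card α) ≃ α,
        w k * (p x * ∏ i ∈ Auth k ∩ precedingSet σ x, (1 - p i))
      = ((Fintype.card α).factorial : ℝ) * (p x *
          (w k * ∑ S ∈ ((Auth k).erase x).powerset, (∏ i ∈ S, (1 - p i)) /
            ((((Auth k).card - S.card : ℕ) : ℝ) *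
              (((Auth k).card.choose S.card : ℕ) : ℝ)))) := by
    intro k hk
    rw [← Finset.mul_sum, ← Finset.mul_sum, hkey k hk]
    ring
  rw [Finset.sum_congr rfl hfinal, ← Finset.mul_sum, ← mul_assoc,
    one_div_mul_cancel hn, one_mul, ← Finset.mul_sum]

end
end

section
/- In a credit-attribution setting with reliabilities p : N → [0,1], let x ∈ N be an author such that every paper containing x has exactly two authors (x and one other author). Then Sh[v̄_{FO}](x) = p_x · Σ_{l ∈ CA(x)} C(x,l) · p_l/2, where CA(x) is the set of coauthors of x and C(x,l) = Σ_{k ∈ Pap_x ∩ Pap_l} w_k is the total weight of the papers jointly authored by x and l. -/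
open Finset

attribute [local instance] Classical.propDecidable

noncomputable section

/-- The set of coauthors of `x`. -/
def CA {α β : Type*} [Fintype α] [Fintype β] (Auth : β → Finset α) (x : α) : Finset α :=
  Finset.univ.filter fun l => l ≠ x ∧ ∃ k, x ∈ Auth k ∧ l ∈ Auth k

/-- `C(x,l)`: the total weight of papers jointly authored by `x` and `l`. -/
def jointContrib {α β : Type*} [Fintype β] (Auth : β → Finset α) (w : β → ℝ) (x l : α) : ℝ :=
  ∑ k ∈ Finset.univ.filter (fun k => x ∈ Auth k ∧ l ∈ Auth k), w k

lemma relExt_unanimity {α : Type*} (p : α → ℝ) (T S : Finset α) :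
    relExt p (fun S' => if T ⊆ S' then 1 else 0) S
      = if T ⊆ S then ∏ i ∈ T, p i else 0 := by
  unfold relExt
  by_cases hTS : T ⊆ S
  · rw [if_pos hTS]
    simp only [ite_mul, one_mul, zero_mul]
    rw [← Finset.sum_filter]
    have key : ∑ T' ∈ S.powerset.filter (fun T' => T ⊆ T'), prodPi p T' S
        = ∑ U ∈ (S \ T).powerset,
            (∏ i ∈ T, p i) * ((∏ i ∈ U, p i) * ∏ i ∈ (S \ T) \ U, (1 - p i)) := by
      refine Finset.sum_nbij' (fun T' => T' \ T) (fun U => U ∪ T) ?_ ?_ ?_ ?_ ?_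
      · intro T' hT'
        rw [Finset.mem_filter, Finset.mem_powerset] at hT'
        rw [Finset.mem_powerset]
        exact Finset.sdiff_subset_sdiff hT'.1 le_rfl
      · intro U hU
        rw [Finset.mem_powerset] at hU
        rw [Finset.mem_filter, Finset.mem_powerset]
        exact ⟨Finset.union_subset (hU.trans (Finset.sdiff_subset)) hTS,
          Finset.subset_union_right⟩
      · intro T' hT'
        rw [Finset.mem_filter, Finset.mem_powerset] at hT'
        exact Finset.sdiff_union_of_subset hT'.2
      · intro U hU
        rw [Finset.mem_powerset] at hU
        have : Disjoint U T := Finset.disjoint_of_subset_left hU Finset.sdiff_disjoint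
        show (U ∪ T) \ T = U
        rw [Finset.union_sdiff_right, Finset.sdiff_eq_self_of_disjoint this]
      · intro T' hT'
        rw [Finset.mem_filter, Finset.mem_powerset] at hT'
        obtain ⟨hT'S, hTT'⟩ := hT'
        have h1 : (∏ i ∈ T', p i) = (∏ i ∈ T, p i) * ∏ i ∈ T' \ T, p i := by
          rw [mul_comm, Finset.prod_sdiff hTT']
        have h2 : S \ T' = (S \ T) \ (T' \ T) := by
          ext a
          simp only [Finset.mem_sdiff]
          constructor
          · intro ⟨ha, hna⟩
            exact ⟨⟨ha, fun h => hna (hTT' h)⟩, fun h => hna h.1⟩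
          · rintro ⟨⟨ha, hna⟩, h⟩
            exact ⟨ha, fun haT' => h ⟨haT', hna⟩⟩
        show prodPi p T' S = (∏ i ∈ T, p i) * ((∏ i ∈ T' \ T, p i) * ∏ i ∈ (S \ T) \ (T' \ T), (1 - p i))
        unfold prodPi
        rw [h1, h2]
        ring
    rw [key, ← Finset.mul_sum, ← Finset.prod_add]
    have : ∀ i ∈ S \ T, p i + (1 - p i) = 1 := fun i _ => by ring
    rw [Finset.prod_congr rfl this, Finset.prod_const_one, mul_one]
  · rw [if_neg hTS]
    apply Finset.sum_eq_zero
    intro T' hT'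
    rw [Finset.mem_powerset] at hT'
    show (if T ⊆ T' then (1:ℝ) else 0) * prodPi p T' S = 0
    rw [if_neg (fun h : T ⊆ T' => hTS (h.trans hT')), zero_mul]

lemma x_not_mem_precedingSet {α : Type*} [Fintype α] (σ : Fin (Fintype.card α) ≃ α) (x : α) :
    x ∉ precedingSet σ x := by
  simp [precedingSet]

lemma shapley_sum {α β : Type*} [Fintype α] [Fintype β] (f : β → Finset α → ℝ) (x : α) :
    shapley (fun S => ∑ k, f k S) x = ∑ k, shapley (f k) x := by
  unfold shapley
  simp only [← Finset.sum_sub_distrib]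
  rw [Finset.sum_comm, Finset.mul_sum]

lemma shapley_not_mem {α : Type*} [Fintype α] (c : ℝ) (T : Finset α) (x : α) (hx : x ∉ T) :
    shapley (fun S => c * (if T ⊆ S then 1 else 0)) x = 0 := by
  unfold shapley
  rw [Finset.sum_eq_zero, mul_zero]
  intro σ _
  have h : (T ⊆ insert x (precedingSet σ x)) ↔ T ⊆ precedingSet σ x := by
    constructor
    · intro h a ha
      rcases Finset.mem_insert.mp (h ha) with h' | h'
      · exact absurd (h' ▸ ha) hx
      · exact h'
    · intro h
      exact h.trans (Finset.subset_insert _ _)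
  show c * (if T ⊆ insert x (precedingSet σ x) then (1:ℝ) else 0)
      - c * (if T ⊆ precedingSet σ x then (1:ℝ) else 0) = 0
  rw [if_congr h rfl rfl, sub_self]

lemma card_half {α : Type*} [Fintype α] (x l : α) (hl : l ≠ x) :
    ((Finset.univ.filter fun σ : Fin (Fintype.card α) ≃ α => σ.symm l < σ.symm x).card) * 2
      = (Fintype.card α).factorial := by
  set A := (Finset.univ.filter fun σ : Fin (Fintype.card α) ≃ α => σ.symm l < σ.symm x) with hA
  set B := (Finset.univ.filter fun σ : Fin (Fintype.card α) ≃ α => σ.symm x < σ.symm l) with hB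
  have hcard : A.card = B.card := by
    refine Finset.card_nbij' (fun σ => σ.trans (Equiv.swap x l))
      (fun σ => σ.trans (Equiv.swap x l)) ?_ ?_ ?_ ?_
    · intro σ hσ
      rw [hA, Finset.mem_coe, Finset.mem_filter] at hσ
      rw [hB, Finset.mem_coe, Finset.mem_filter]
      refine ⟨Finset.mem_univ _, ?_⟩
      simpa [Equiv.symm_trans_apply] using hσ.2
    · intro σ hσ
      rw [hB, Finset.mem_coe, Finset.mem_filter] at hσ
      rw [hA, Finset.mem_coe, Finset.mem_filter]
      refine ⟨Finset.mem_univ _, ?_⟩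
      simpa [Equiv.symm_trans_apply] using hσ.2
    · intro σ _
      ext i
      simp
    · intro σ _
      ext i
      simp
  have hne : ∀ σ : Fin (Fintype.card α) ≃ α, σ.symm l ≠ σ.symm x :=
    fun σ h => hl (σ.symm.injective h)
  have hBeq : B = Finset.univ.filter fun σ : Fin (Fintype.card α) ≃ α =>
      ¬ σ.symm l < σ.symm x := by
    rw [hB]
    apply Finset.filter_congr
    intro σ _
    constructor
    · exact fun h => not_lt.mpr h.le
    · intro h
      exact lt_of_le_of_ne (not_lt.mp h) (hne σ).symm
  have htot : A.card + B.card = (Fintype.card α).factorial := by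
    rw [hBeq, hA, Finset.card_filter_add_card_filter_not, Finset.card_univ,
      Fintype.card_equiv (Fintype.equivFin α).symm, Fintype.card_fin]
  omega

lemma shapley_pair {α : Type*} [Fintype α] [DecidableEq α] (c : ℝ) (x l : α) (hl : l ≠ x) :
    shapley (fun S => c * (if ({x, l} : Finset α) ⊆ S then 1 else 0)) x = c / 2 := by
  unfold shapley
  refine Eq.trans (congrArg _ (Finset.sum_congr
    (g := fun σ => c * (if σ.symm l < σ.symm x then (1:ℝ) else 0)) rfl fun σ _ => ?_)) ?_
  · have hins : ∀ (a : α) (s : Finset α),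
        (@insert α (Finset α) (@Finset.instInsert α (fun a b => Classical.propDecidable (a = b))) a s)
          = insert a s := by
      intro a s
      ext b
      simp
    simp only [hins]
    show c * (if ({x, l} : Finset α) ⊆ insert x (precedingSet σ x) then (1:ℝ) else 0)
        - c * (if ({x, l} : Finset α) ⊆ precedingSet σ x then (1:ℝ) else 0)
      = c * (if σ.symm l < σ.symm x then (1:ℝ) else 0)
    have hx := x_not_mem_precedingSet σ x
    rw [if_neg (fun h : ({x, l} : Finset α) ⊆ precedingSet σ x =>
      hx (h (Finset.mem_insert_self x {l}))), mul_zero, sub_zero]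
    have hiff : ({x, l} : Finset α) ⊆ insert x (precedingSet σ x) ↔ σ.symm l < σ.symm x := by
      constructor
      · intro h
        have hmem := h (Finset.mem_insert_of_mem (Finset.mem_singleton_self l))
        rcases Finset.mem_insert.mp hmem with h' | h'
        · exact absurd h' hl
        · simpa [precedingSet] using h'
      · intro h a ha
        rcases Finset.mem_insert.mp ha with rfl | h'
        · exact Finset.mem_insert_self _ _
        · rw [Finset.mem_singleton] at h'
          subst h'
          exact Finset.mem_insert_of_mem (by simp [precedingSet, h])
    rw [if_congr hiff rfl rfl]
  · rw [← Finset.mul_sum, Finset.sum_boole]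
    have hc := card_half x l hl
    have hfac : ((Fintype.card α).factorial : ℝ) ≠ 0 := by
      exact_mod_cast (Fintype.card α).factorial_pos.ne'
    have h2 := congrArg (fun n : ℕ => (n : ℝ)) hc
    push_cast at h2
    rw [one_div, inv_mul_eq_iff_eq_mul₀ hfac, ← h2]
    ring

lemma relExt_vFO {α β : Type*} [Fintype β] (Auth : β → Finset α) (w : β → ℝ)
    (p : α → ℝ) (S : Finset α) :
    relExt p (vFO Auth w) S
      = ∑ k, w k * (if Auth k ⊆ S then ∏ i ∈ Auth k, p i else 0) := by
  unfold relExt vFO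
  calc ∑ T ∈ S.powerset, (∑ k ∈ Finset.univ.filter (fun k => Auth k ⊆ T), w k) * prodPi p T S
      = ∑ T ∈ S.powerset, ∑ k : β,
          w k * ((if Auth k ⊆ T then (1:ℝ) else 0) * prodPi p T S) := by
        refine Finset.sum_congr rfl fun T _ => ?_
        rw [Finset.sum_filter, Finset.sum_mul]
        refine Finset.sum_congr rfl fun k _ => ?_
        by_cases h : Auth k ⊆ T <;> simp [h]
    _ = ∑ k : β, ∑ T ∈ S.powerset,
          w k * ((if Auth k ⊆ T then (1:ℝ) else 0) * prodPi p T S) := Finset.sum_comm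
    _ = ∑ k : β, w k * (if Auth k ⊆ S then ∏ i ∈ Auth k, p i else 0) := by
        refine Finset.sum_congr rfl fun k _ => ?_
        rw [← Finset.mul_sum]
        congr 1
        have h := relExt_unanimity p (Auth k) S
        unfold relExt at h
        simpa using h

theorem stmt_14 {α β : Type*} [Fintype α] [Fintype β] [DecidableEq α]
    (Auth : β → Finset α) (hAuth : ∀ k, (Auth k).Nonempty)
    (w : β → ℝ) (hw : ∀ k, 0 ≤ w k)
    (p : α → ℝ) (hp : ∀ i, p i ∈ Set.Icc (0 : ℝ) 1)
    (x : α) (h2 : ∀ k, x ∈ Auth k → (Auth k).card = 2) :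
    shapley (relExt p (vFO Auth w)) x =
      p x * ∑ l ∈ CA Auth x, jointContrib Auth w x l * p l / 2 := by
  letI : DecidableEq α := fun a b => Classical.propDecidable (a = b)
  have hrel : relExt p (vFO Auth w)
      = fun S => ∑ k, w k * (if Auth k ⊆ S then ∏ i ∈ Auth k, p i else 0) :=
    funext fun S => relExt_vFO Auth w p S
  have hL : ∀ k, shapley (fun S => w k * (if Auth k ⊆ S then ∏ i ∈ Auth k, p i else 0)) x
      = if x ∈ Auth k then ∑ l ∈ (Auth k).erase x, w k * (p x * p l) / 2 else 0 := by
    intro k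
    by_cases hx : x ∈ Auth k
    · rw [if_pos hx]
      obtain ⟨a, b, hab, hk⟩ := Finset.card_eq_two.mp (h2 k hx)
      obtain ⟨l, hl, hkl⟩ : ∃ l, l ≠ x ∧ Auth k = {x, l} := by
        have hx' := hx
        rw [hk] at hx'
        rcases Finset.mem_insert.mp hx' with rfl | hx'
        · exact ⟨b, Ne.symm hab, hk⟩
        · rw [Finset.mem_singleton] at hx'
          subst hx'
          exact ⟨a, hab, by rw [hk, Finset.pair_comm]⟩
      have hxl : x ∉ ({l} : Finset α) := by
        rw [Finset.mem_singleton]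
        exact fun h => hl h.symm
      have hprod2 : ∏ i ∈ ({x, l} : Finset α), p i = p x * p l := by
        rw [show ({x, l} : Finset α) = insert x {l} from rfl, Finset.prod_insert hxl,
          Finset.prod_singleton]
      have hfun : (fun S => w k * (if Auth k ⊆ S then ∏ i ∈ Auth k, p i else 0))
          = fun S => (w k * (p x * p l)) * (if ({x, l} : Finset α) ⊆ S then 1 else 0) := by
        funext S
        rw [hkl, hprod2]
        by_cases h : ({x, l} : Finset α) ⊆ S <;> simp [h]
      rw [hfun, shapley_pair (w k * (p x * p l)) x l hl, hkl,
        show ({x, l} : Finset α) = insert x {l} from rfl, Finset.erase_insert hxl,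
        Finset.sum_singleton]
    · rw [if_neg hx]
      have hfun : (fun S => w k * (if Auth k ⊆ S then ∏ i ∈ Auth k, p i else 0))
          = fun S => (w k * ∏ i ∈ Auth k, p i) * (if Auth k ⊆ S then 1 else 0) := by
        funext S
        by_cases h : Auth k ⊆ S <;> simp [h]
      rw [hfun]
      exact shapley_not_mem _ _ x hx
  have hR : ∀ l, p x * (jointContrib Auth w x l * p l / 2)
      = ∑ k, (if x ∈ Auth k ∧ l ∈ Auth k then w k * (p x * p l) / 2 else 0) := by
    intro l
    unfold jointContrib
    rw [Finset.sum_filter, Finset.sum_mul, Finset.sum_div, Finset.mul_sum]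
    refine Finset.sum_congr rfl fun k _ => ?_
    by_cases h : x ∈ Auth k ∧ l ∈ Auth k
    · rw [if_pos h, if_pos h]
      ring
    · rw [if_neg h, if_neg h]
      ring
  calc shapley (relExt p (vFO Auth w)) x
      = ∑ k, shapley (fun S => w k * (if Auth k ⊆ S then ∏ i ∈ Auth k, p i else 0)) x := by
        rw [hrel]
        exact shapley_sum _ x
    _ = ∑ k, (if x ∈ Auth k then ∑ l ∈ (Auth k).erase x, w k * (p x * p l) / 2 else 0) :=
        Finset.sum_congr rfl fun k _ => hL k
    _ = ∑ k, ∑ l ∈ CA Auth x, (if x ∈ Auth k ∧ l ∈ Auth k then w k * (p x * p l) / 2 else 0) := by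
        refine Finset.sum_congr rfl fun k _ => ?_
        by_cases hx : x ∈ Auth k
        · rw [if_pos hx]
          have hset : (CA Auth x).filter (fun l => l ∈ Auth k) = (Auth k).erase x := by
            ext l
            simp only [CA, Finset.mem_filter, Finset.mem_univ, true_and, Finset.mem_erase]
            constructor
            · rintro ⟨⟨hlx, -⟩, hlk⟩
              exact ⟨hlx, hlk⟩
            · rintro ⟨hlx, hlk⟩
              exact ⟨⟨hlx, k, hx, hlk⟩, hlk⟩
          rw [← hset, Finset.sum_filter]
          refine Finset.sum_congr rfl fun l _ => ?_
          by_cases hlk : l ∈ Auth k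
          · rw [if_pos hlk, if_pos ⟨hx, hlk⟩]
          · rw [if_neg hlk, if_neg (fun h => hlk h.2)]
        · rw [if_neg hx]
          exact (Finset.sum_eq_zero fun l _ => if_neg (fun h => hx h.1)).symm
    _ = ∑ l ∈ CA Auth x, ∑ k, (if x ∈ Auth k ∧ l ∈ Auth k then w k * (p x * p l) / 2 else 0) :=
        Finset.sum_comm
    _ = ∑ l ∈ CA Auth x, p x * (jointContrib Auth w x l * p l / 2) :=
        Finset.sum_congr rfl fun l _ => (hR l).symm
    _ = p x * ∑ l ∈ CA Auth x, jointContrib Auth w x l * p l / 2 := by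
        rw [Finset.mul_sum]


end
end
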